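/- (Theorem 1) Let D ⊆ E satisfy d_D < (k-1)/2. Then σ^{D+} and σ^{D-} are ground state configurations: for every spin configuration σ that differs from σ^{D+} (respectively from σ^{D-}) at only finitely many vertices, the excess energy H(σ) - H(σ^{D+}) (respectively H(σ) - H(σ^{D-})) is nonnegative. -/

import Mathlib

open Classical

/-- `G` is a Cayley tree with branching number `k`: an infinite connected acyclic
simple graph in which every vertex has exactly `k + 1` neighbors. -/
structure IsCayleyTree {V : Type*} (G : SimpleGraph V) (k : ℕ) : Prop where
  infinite : Infinite V
  connected : G.Connected
  acyclic : G.IsAcyclic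
  degree : ∀ v : V, (G.neighborSet v).ncard = k + 1

/-- A spin configuration takes values in `{-1, +1}`. -/
def IsSpin {V : Type*} (σ : V → ℤ) : Prop := ∀ v, σ v = 1 ∨ σ v = -1

/-- `σ` is frustrated exactly on the edges of `D`: for every edge `{x,y}` of `G`,
`σ x * σ y = -1` if `{x,y} ∈ D` and `σ x * σ y = 1` otherwise. -/
def SatisfiesD {V : Type*} (G : SimpleGraph V) (D : Set (Sym2 V)) (σ : V → ℤ) : Prop :=
  ∀ x y : V, G.Adj x y →
    (s(x, y) ∈ D → σ x * σ y = -1) ∧ (s(x, y) ∉ D → σ x * σ y = 1)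

/-- The excess energy `H(σ) - H(σbase) = J * Σ_{{x,y} ∈ E} (σbase x * σbase y - σ x * σ y)`,
a sum with finitely many nonzero terms when `σ` and `σbase` differ at finitely many sites. -/
noncomputable def excessEnergy {V : Type*} (G : SimpleGraph V) (J : ℝ) (σ σbase : V → ℤ) : ℝ :=
  J * ∑ᶠ e ∈ G.edgeSet,
      ((Sym2.lift ⟨fun x y => σbase x * σbase y - σ x * σ y, fun _ _ => by ring⟩ e : ℤ) : ℝ)

/-- The configuration obtained from `σ` by flipping all spins in `C`. -/
noncomputable def flipSpins {V : Type*} (σ : V → ℤ) (C : Set V) : V → ℤ :=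
  fun v => if v ∈ C then -σ v else σ v

/-- The number `d_D(v)` of edges of `D` incident to the vertex `v`. -/
noncomputable def incidentCount {V : Type*} (D : Set (Sym2 V)) (v : V) : ℕ :=
  {e ∈ D | v ∈ e}.ncard

/-- A set of vertices is connected if any two of its vertices are joined by a
walk staying within the set. -/
def SetConnected {V : Type*} (G : SimpleGraph V) (S : Set V) : Prop :=
  ∀ x ∈ S, ∀ y ∈ S, ∃ p : G.Walk x y, ∀ z ∈ p.support, z ∈ S

namespace GSAux

variable {V : Type*} {G : SimpleGraph V}

lemma dist_le_of_mem_support {r x w : V} (p : G.Walk r x) (hw : w ∈ p.support) :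
    G.dist r w ≤ p.length :=
  le_trans (SimpleGraph.dist_le (p.takeUntil w hw)) (SimpleGraph.Walk.length_takeUntil_le p hw)

lemma no_two_parents (hac : G.IsAcyclic) (hc : G.Connected) {r v x y : V}
    (hx : G.Adj x v) (hy : G.Adj y v) (hxy : x ≠ y)
    (hdx : G.dist r x < G.dist r v) (hdy : G.dist r y < G.dist r v) : False := by
  obtain ⟨px, hpx, hlx⟩ := hc.exists_path_of_dist r x
  obtain ⟨py, hpy, hly⟩ := hc.exists_path_of_dist r y
  have hvx : v ∉ px.support := fun hv => by
    have := dist_le_of_mem_support px hv; omega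
  have hvy : v ∉ py.support := fun hv => by
    have := dist_le_of_mem_support py hv; omega
  have h1 : (px.concat hx).IsPath := by
    rw [← SimpleGraph.Walk.isPath_reverse_iff, SimpleGraph.Walk.reverse_concat]
    exact hpx.reverse.cons (by simpa [SimpleGraph.Walk.support_reverse] using hvx)
  have h2 : (py.concat hy).IsPath := by
    rw [← SimpleGraph.Walk.isPath_reverse_iff, SimpleGraph.Walk.reverse_concat]
    exact hpy.reverse.cons (by simpa [SimpleGraph.Walk.support_reverse] using hvy)
  have heq : px.concat hx = py.concat hy :=
    congrArg Subtype.val (hac.path_unique ⟨px.concat hx, h1⟩ ⟨py.concat hy, h2⟩)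
  have hxeq : ((px.concat hx).reverse).getVert 1 = x := by
    rw [SimpleGraph.Walk.reverse_concat]
    exact (SimpleGraph.Walk.getVert_cons_succ (n := 0) _ _).trans (SimpleGraph.Walk.getVert_zero _)
  have hyeq : ((py.concat hy).reverse).getVert 1 = y := by
    rw [SimpleGraph.Walk.reverse_concat]
    exact (SimpleGraph.Walk.getVert_cons_succ (n := 0) _ _).trans (SimpleGraph.Walk.getVert_zero _)
  exact hxy (by rw [← hxeq, heq, hyeq])

lemma adj_dist_ne (hac : G.IsAcyclic) (hc : G.Connected) (r : V) {x y : V} (h : G.Adj x y) :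
    G.dist r x ≠ G.dist r y := by
  intro hd
  obtain ⟨px, hpx, hlx⟩ := hc.exists_path_of_dist r x
  obtain ⟨py, hpy, hly⟩ := hc.exists_path_of_dist r y
  have hyx : y ∉ px.support := by
    intro hys
    have hlt : (px.takeUntil y hys).length < px.length := by
      rcases lt_or_eq_of_le (SimpleGraph.Walk.length_takeUntil_le px hys) with hl | hl
      · exact hl
      · exfalso
        have hspec := SimpleGraph.Walk.take_spec px hys
        have hlen : (px.takeUntil y hys).length + (px.dropUntil y hys).length = px.length := by
          rw [← SimpleGraph.Walk.length_append, hspec]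
        have h0 : (px.dropUntil y hys).length = 0 := by omega
        exact h.ne' (SimpleGraph.Walk.eq_of_length_eq_zero h0)
    have := SimpleGraph.dist_le (px.takeUntil y hys)
    omega
  have hpath : (px.concat h).IsPath := by
    rw [← SimpleGraph.Walk.isPath_reverse_iff, SimpleGraph.Walk.reverse_concat]
    exact hpx.reverse.cons (by simpa [SimpleGraph.Walk.support_reverse] using hyx)
  have heq : px.concat h = py :=
    congrArg Subtype.val (hac.path_unique ⟨px.concat h, hpath⟩ ⟨py, hpy⟩)
  have : (px.concat h).length = py.length := by rw [heq]
  rw [SimpleGraph.Walk.length_concat, hlx, hly] at this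
  omega

lemma card_filter_mem_pair (Cf : Finset V) (x y : V) (hxy : x ≠ y) :
    (Cf.filter (fun v => v ∈ s(x, y))).card
      = (if x ∈ Cf then 1 else 0) + (if y ∈ Cf then 1 else 0) := by
  classical
  have hsplit : Cf.filter (fun v => v ∈ s(x, y))
      = Cf.filter (fun v => v = x) ∪ Cf.filter (fun v => v = y) := by
    rw [← Finset.filter_or]
    apply Finset.filter_congr
    intro v _
    simp [Sym2.mem_iff]
  have cx : ∀ z : V, (Cf.filter (fun v => v = z)).card = if z ∈ Cf then 1 else 0 := by
    intro z
    split_ifs with hz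
    · rw [Finset.card_eq_one]
      exact ⟨z, by ext w; simp [Finset.mem_filter]; rintro rfl; exact hz⟩
    · rw [Finset.card_eq_zero]
      ext w; simp [Finset.mem_filter]; rintro hw rfl; exact hz hw
  rw [hsplit, Finset.card_union_of_disjoint]
  · rw [cx, cx]
  · rw [Finset.disjoint_left]
    intro a ha hb
    simp only [Finset.mem_filter] at ha hb
    exact hxy (ha.2 ▸ hb.2 ▸ rfl)

lemma ground_aux {V : Type*} (G : SimpleGraph V) (k : ℕ) (hk : 2 ≤ k)
    (hac : G.IsAcyclic) (hconn : G.Connected)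
    (hdegree : ∀ v : V, (G.neighborSet v).ncard = k + 1)
    (root : V) (J : ℝ) (hJ : 0 < J)
    (D : Set (Sym2 V)) (hD : D ⊆ G.edgeSet)
    (dD : ℕ) (hbdd : BddAbove (Set.range fun v => incidentCount D v))
    (hdD : dD = ⨆ v, incidentCount D v)
    (hsmall : (dD : ℝ) < ((k : ℝ) - 1) / 2)
    (σb : V → ℤ) (hσb : IsSpin σb) (hσbD : SatisfiesD G D σb)
    (τ : V → ℤ) (hτ : IsSpin τ) (hfin : {v | τ v ≠ σb v}.Finite) :
    0 ≤ excessEnergy G J τ σb := by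
  classical
  have h2d : 2 * dD + 2 ≤ k := by
    have h1 : (2 * dD : ℝ) + 1 < (k : ℝ) := by linarith
    have h2 : ((2 * dD + 1 : ℕ) : ℝ) < (k : ℝ) := by push_cast; linarith
    have : (2 * dD + 1 : ℕ) < k := by exact_mod_cast h2
    omega
  set Cf : Finset V := hfin.toFinset with hCf
  have hmemCf : ∀ v, v ∈ Cf ↔ τ v ≠ σb v := by
    intro v; simp [hCf]
  have hflip : ∀ v ∈ Cf, τ v = -σb v := by
    intro v hv
    have hne := (hmemCf v).1 hv
    rcases hτ v with h1 | h1 <;> rcases hσb v with h2 | h2 <;> rw [h1, h2] at hne ⊢ <;> omega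
  have hkeep : ∀ v, v ∉ Cf → τ v = σb v := fun v hv =>
    not_not.mp (fun h => hv ((hmemCf v).2 h))
  -- local finiteness
  have hnf : ∀ v, (G.neighborSet v).Finite := fun v =>
    Set.finite_of_ncard_ne_zero (by rw [hdegree v]; omega)
  haveI : G.LocallyFinite := fun v => (hnf v).fintype
  have hdeg : ∀ v, (G.neighborFinset v).card = k + 1 := by
    intro v
    rw [SimpleGraph.neighborFinset_def, ← Set.ncard_eq_toFinset_card']
    exact hdegree v
  -- incident edges
  set incE : V → Finset (Sym2 V) := fun v => (G.neighborFinset v).image (fun w => s(v, w))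
    with hincE
  have hinc_mem : ∀ v e, e ∈ incE v ↔ e ∈ G.edgeSet ∧ v ∈ e := by
    intro v e
    simp only [hincE, Finset.mem_image, SimpleGraph.mem_neighborFinset]
    constructor
    · rintro ⟨w, hw, rfl⟩
      exact ⟨hw, Sym2.mem_mk_left v w⟩
    · rintro ⟨he, hv⟩
      obtain ⟨w, rfl⟩ := Sym2.mem_iff_exists.mp hv
      exact ⟨w, G.mem_edgeSet.mp he, rfl⟩
  have hinc_card : ∀ v, (incE v).card = k + 1 := by
    intro v
    rw [hincE]
    rw [Finset.card_image_of_injOn fun w _ w' _ h => Sym2.congr_right.mp h]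
    exact hdeg v
  have hcount_le : ∀ v, ((incE v).filter (fun e => e ∈ D)).card ≤ dD := by
    intro v
    have hset : {e ∈ D | v ∈ e} = ↑((incE v).filter (fun e => e ∈ D)) := by
      ext e
      simp only [Set.mem_setOf_eq, Finset.coe_filter, Set.mem_setOf_eq, hinc_mem]
      exact ⟨fun ⟨h1, h2⟩ => ⟨⟨hD h1, h2⟩, h1⟩, fun ⟨⟨_, h2⟩, h1⟩ => ⟨h1, h2⟩⟩
    have hic : incidentCount D v = ((incE v).filter (fun e => e ∈ D)).card := by
      rw [incidentCount, hset, Set.ncard_coe_finset]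
    rw [← hic, hdD]
    exact le_ciSup hbdd v
  -- boundary and internal edges
  set U : Finset (Sym2 V) := Cf.biUnion incE with hU
  have hUmem : ∀ e, e ∈ U ↔ e ∈ G.edgeSet ∧ ∃ v ∈ Cf, v ∈ e := by
    intro e
    simp only [hU, Finset.mem_biUnion]
    constructor
    · rintro ⟨v, hv, he⟩
      exact ⟨((hinc_mem v e).1 he).1, v, hv, ((hinc_mem v e).1 he).2⟩
    · rintro ⟨he, v, hv, hve⟩
      exact ⟨v, hv, (hinc_mem v e).2 ⟨he, hve⟩⟩
  set B : Finset (Sym2 V) := U.filter (fun e => ¬ ∀ x ∈ e, x ∈ Cf) with hB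
  set I : Finset (Sym2 V) := U.filter (fun e => ∀ x ∈ e, x ∈ Cf) with hI
  -- the summand
  set F : Sym2 V → ℝ := fun e =>
    ((Sym2.lift ⟨fun x y => σb x * σb y - τ x * τ y, fun _ _ => by ring⟩ e : ℤ) : ℝ) with hF
  have hEE : excessEnergy G J τ σb = J * ∑ᶠ e ∈ G.edgeSet, F e := rfl
  have hFmk : ∀ x y : V, F s(x, y) = ((σb x * σb y - τ x * τ y : ℤ) : ℝ) := by
    intro x y; simp [hF]
  have hzero : ∀ x y : V, (x ∈ Cf ↔ y ∈ Cf) → F s(x, y) = 0 := by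
    intro x y hiff
    rw [hFmk]
    by_cases hx : x ∈ Cf
    · rw [hflip x hx, hflip y (hiff.1 hx)]; push_cast; ring
    · rw [hkeep x hx, hkeep y (fun hy => hx (hiff.2 hy))]; push_cast; ring
  have hval : ∀ x y : V, G.Adj x y → ¬(x ∈ Cf ↔ y ∈ Cf) →
      F s(x, y) = if s(x, y) ∈ D then (-2 : ℝ) else 2 := by
    intro x y hadj hniff
    have hprod : τ x * τ y = -(σb x * σb y) := by
      by_cases hx : x ∈ Cf
      · have hy : y ∉ Cf := fun hy => hniff ⟨fun _ => hy, fun _ => hx⟩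
        rw [hflip x hx, hkeep y hy]; ring
      · have hy : y ∈ Cf := by
          by_contra hy
          exact hniff ⟨fun h => absurd h hx, fun h => absurd h hy⟩
        rw [hkeep x hx, hflip y hy]; ring
    have hz : (σb x * σb y - τ x * τ y : ℤ) = 2 * (σb x * σb y) := by rw [hprod]; ring
    rcases Classical.em (s(x, y) ∈ D) with hd | hd
    · have h1 := (hσbD x y hadj).1 hd
      rw [hFmk, if_pos hd, hz, h1]
      norm_num
    · have h1 := (hσbD x y hadj).2 hd
      rw [hFmk, if_neg hd, hz, h1]
      norm_num
  have hBedge : ∀ e ∈ B, e ∈ G.edgeSet := by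
    intro e he
    rw [hB, Finset.mem_filter] at he
    exact ((hUmem e).1 he.1).1
  have hsupp : G.edgeSet ∩ Function.support F = ↑B ∩ Function.support F := by
    ext e
    induction e using Sym2.inductionOn with
    | hf x y =>
      simp only [Set.mem_inter_iff, Function.mem_support, Finset.mem_coe]
      constructor
      · rintro ⟨he, hne⟩
        refine ⟨?_, hne⟩
        have hniff : ¬(x ∈ Cf ↔ y ∈ Cf) := fun h => hne (hzero x y h)
        rw [hB, Finset.mem_filter]
        constructor
        · rw [hUmem]
          refine ⟨he, ?_⟩
          by_cases hx : x ∈ Cf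
          · exact ⟨x, hx, Sym2.mem_mk_left x y⟩
          · have hy : y ∈ Cf := by tauto
            exact ⟨y, hy, Sym2.mem_mk_right x y⟩
        · intro hall
          by_cases hx : x ∈ Cf
          · exact hniff ⟨fun _ => hall y (Sym2.mem_mk_right x y), fun _ => hx⟩
          · exact hx (hall x (Sym2.mem_mk_left x y))
      · rintro ⟨he, hne⟩
        exact ⟨hBedge _ he, hne⟩
  have hsum : ∑ᶠ e ∈ G.edgeSet, F e = ∑ e ∈ B, F e :=
    finsum_mem_eq_sum_of_inter_support_eq F hsupp
  have hvalB : ∀ e ∈ B, F e = if e ∈ D then (-2 : ℝ) else 2 := by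
    intro e
    induction e using Sym2.inductionOn with
    | hf x y =>
      intro he
      rw [hB, Finset.mem_filter] at he
      obtain ⟨heU, hnall⟩ := he
      obtain ⟨hedge, v, hv, hve⟩ := (hUmem _).1 heU
      have hadj : G.Adj x y := G.mem_edgeSet.mp hedge
      apply hval x y hadj
      intro hiff
      apply hnall
      intro z hz
      rcases Sym2.mem_iff.mp hz with rfl | rfl
      · rcases Sym2.mem_iff.mp hve with rfl | rfl
        · exact hv
        · exact hiff.2 hv
      · rcases Sym2.mem_iff.mp hve with rfl | rfl
        · exact hiff.1 hv
        · exact hv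
  set a := (B.filter (fun e => e ∈ D)).card with ha
  set b := (B.filter (fun e => ¬ e ∈ D)).card with hb
  have hsum2 : ∑ e ∈ B, F e = (a : ℝ) * (-2) + (b : ℝ) * 2 := by
    rw [Finset.sum_congr rfl hvalB, Finset.sum_ite, Finset.sum_const, Finset.sum_const,
      nsmul_eq_mul, nsmul_eq_mul]
  -- double counting
  have hIU : ∀ v ∈ Cf, incE v ⊆ U := fun v hv e he => Finset.mem_biUnion.mpr ⟨v, hv, he⟩
  have hcount1 : ∑ v ∈ Cf, (incE v).card = Cf.card * (k + 1) := by
    rw [Finset.sum_congr rfl (fun v _ => hinc_card v), Finset.sum_const, smul_eq_mul]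
  have hcount2 : ∑ v ∈ Cf, (incE v).card
      = ∑ e ∈ U, (Cf.filter (fun v => v ∈ e)).card := by
    have h1 : ∀ v ∈ Cf, (incE v).card = ∑ e ∈ U, if e ∈ incE v then 1 else 0 := by
      intro v hv
      rw [Finset.sum_ite_mem, Finset.inter_eq_right.mpr (hIU v hv), Finset.card_eq_sum_ones]
    rw [Finset.sum_congr rfl h1, Finset.sum_comm]
    apply Finset.sum_congr rfl
    intro e heU
    have hedge := ((hUmem e).1 heU).1
    rw [Finset.card_filter]
    apply Finset.sum_congr rfl
    intro v _
    have hiff : (e ∈ incE v) ↔ (v ∈ e) := by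
      rw [hinc_mem]
      exact ⟨fun h => h.2, fun h => ⟨hedge, h⟩⟩
    simp [hiff]
  have hcntI : ∀ e ∈ I, (Cf.filter (fun v => v ∈ e)).card = 2 := by
    intro e
    induction e using Sym2.inductionOn with
    | hf x y =>
      intro he
      rw [hI, Finset.mem_filter] at he
      obtain ⟨heU, hall⟩ := he
      have hadj : G.Adj x y := G.mem_edgeSet.mp ((hUmem _).1 heU).1
      rw [card_filter_mem_pair Cf x y hadj.ne,
        if_pos (hall x (Sym2.mem_mk_left x y)), if_pos (hall y (Sym2.mem_mk_right x y))]
  have hcntB : ∀ e ∈ B, (Cf.filter (fun v => v ∈ e)).card = 1 := by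
    intro e
    induction e using Sym2.inductionOn with
    | hf x y =>
      intro he
      rw [hB, Finset.mem_filter] at he
      obtain ⟨heU, hnall⟩ := he
      obtain ⟨hedge, v, hv, hve⟩ := (hUmem _).1 heU
      have hadj : G.Adj x y := G.mem_edgeSet.mp hedge
      have hone : (x ∈ Cf ∧ y ∉ Cf) ∨ (x ∉ Cf ∧ y ∈ Cf) := by
        by_cases hx : x ∈ Cf <;> by_cases hy : y ∈ Cf
        · exact absurd (fun z hz => by
            rcases Sym2.mem_iff.mp hz with rfl | rfl <;> assumption) hnall
        · exact Or.inl ⟨hx, hy⟩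
        · exact Or.inr ⟨hx, hy⟩
        · rcases Sym2.mem_iff.mp hve with rfl | rfl
          · exact absurd hv hx
          · exact absurd hv hy
      rw [card_filter_mem_pair Cf x y hadj.ne]
      rcases hone with ⟨h1, h2⟩ | ⟨h1, h2⟩ <;> simp [h1, h2]
  have hsumU : ∑ e ∈ U, (Cf.filter (fun v => v ∈ e)).card = 2 * I.card + B.card := by
    rw [← Finset.sum_filter_add_sum_filter_not U (fun e => ∀ x ∈ e, x ∈ Cf), ← hI, ← hB,
      Finset.sum_congr rfl hcntI, Finset.sum_congr rfl hcntB,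
      Finset.sum_const, Finset.sum_const, smul_eq_mul, smul_eq_mul]
    ring
  have heq1 : Cf.card * (k + 1) = 2 * I.card + B.card := by
    rw [← hcount1, hcount2, hsumU]
  -- the injection from internal edges to Cf
  have hfarex : ∀ e : Sym2 V, ∃ v, v ∈ e ∧ ∀ w ∈ e, G.dist root w ≤ G.dist root v := by
    intro e
    induction e using Sym2.inductionOn with
    | hf x y =>
      rcases le_total (G.dist root x) (G.dist root y) with h | h
      · refine ⟨y, Sym2.mem_mk_right x y, ?_⟩
        intro w hw
        rcases Sym2.mem_iff.mp hw with rfl | rfl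
        · exact h
        · exact le_refl _
      · refine ⟨x, Sym2.mem_mk_left x y, ?_⟩
        intro w hw
        rcases Sym2.mem_iff.mp hw with rfl | rfl
        · exact le_refl _
        · exact h
  choose far hfarmem hfarmax using hfarex
  have hInj : Set.InjOn far ↑I := by
    intro e1 he1 e2 he2 hfeq
    by_contra hne
    rw [Finset.mem_coe, hI, Finset.mem_filter] at he1 he2
    obtain ⟨x, hex⟩ := Sym2.mem_iff_exists.mp (hfarmem e1)
    obtain ⟨y, hey⟩ := Sym2.mem_iff_exists.mp (hfarmem e2)
    have hxadj : G.Adj (far e1) x := by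
      have h1 : e1 ∈ G.edgeSet := ((hUmem e1).1 he1.1).1
      rw [hex] at h1; exact G.mem_edgeSet.mp h1
    have hyadj : G.Adj (far e1) y := by
      have h1 : e2 ∈ G.edgeSet := ((hUmem e2).1 he2.1).1
      rw [hey, ← hfeq] at h1; exact G.mem_edgeSet.mp h1
    have hxy : x ≠ y := fun h => hne (by rw [hex, hey, ← hfeq, h])
    have hdx : G.dist root x < G.dist root (far e1) := by
      have hle := hfarmax e1 x (by rw [hex]; exact Sym2.mem_mk_right _ _)
      exact lt_of_le_of_ne hle (adj_dist_ne hac hconn root hxadj.symm)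
    have hdy : G.dist root y < G.dist root (far e1) := by
      have hle := hfarmax e2 y (by rw [hey]; exact Sym2.mem_mk_right _ _)
      rw [← hfeq] at hle
      exact lt_of_le_of_ne hle (adj_dist_ne hac hconn root hyadj.symm)
    exact no_two_parents hac hconn hxadj.symm hyadj.symm hxy hdx hdy
  have hImaps : ∀ e ∈ I, far e ∈ Cf := by
    intro e he
    rw [hI, Finset.mem_filter] at he
    exact he.2 (far e) (hfarmem e)
  have hIcard : I.card ≤ Cf.card := Finset.card_le_card_of_injOn far hImaps hInj
  -- bounding frustrated boundary edges
  have haD : a ≤ Cf.card * dD := by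
    have hsub : B.filter (fun e => e ∈ D)
        ⊆ Cf.biUnion (fun v => (incE v).filter (fun e => e ∈ D)) := by
      intro e he
      rw [Finset.mem_filter] at he
      obtain ⟨heB, heD⟩ := he
      rw [hB, Finset.mem_filter] at heB
      obtain ⟨hedge, v, hv, hve⟩ := (hUmem e).1 heB.1
      exact Finset.mem_biUnion.mpr
        ⟨v, hv, Finset.mem_filter.mpr ⟨(hinc_mem v e).2 ⟨hedge, hve⟩, heD⟩⟩
    calc a ≤ (Cf.biUnion fun v => (incE v).filter (fun e => e ∈ D)).card :=
          Finset.card_le_card hsub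
      _ ≤ ∑ v ∈ Cf, ((incE v).filter (fun e => e ∈ D)).card := Finset.card_biUnion_le
      _ ≤ ∑ v ∈ Cf, dD := Finset.sum_le_sum (fun v _ => hcount_le v)
      _ = Cf.card * dD := by rw [Finset.sum_const, smul_eq_mul]
  -- arithmetic: 2a ≤ |B|
  have hab : a + b = B.card := Finset.card_filter_add_card_filter_not (fun e => e ∈ D)
  have h2a : 2 * a ≤ B.card := by
    have c1 : 2 * (Cf.card * dD) + 2 * Cf.card ≤ Cf.card * k := by
      calc 2 * (Cf.card * dD) + 2 * Cf.card = Cf.card * (2 * dD + 2) := by ring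
        _ ≤ Cf.card * k := Nat.mul_le_mul_left _ h2d
    have c2 : Cf.card * k + Cf.card = 2 * I.card + B.card := by
      rw [← heq1]; ring
    have c3 : 2 * a + 2 * Cf.card ≤ B.card + 2 * Cf.card := by
      calc 2 * a + 2 * Cf.card ≤ 2 * (Cf.card * dD) + 2 * Cf.card :=
            Nat.add_le_add_right (Nat.mul_le_mul_left _ haD) _
        _ ≤ Cf.card * k := c1
        _ ≤ Cf.card * k + Cf.card := Nat.le_add_right _ _
        _ = 2 * I.card + B.card := c2
        _ ≤ 2 * Cf.card + B.card := Nat.add_le_add_right (Nat.mul_le_mul_left _ hIcard) _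
        _ = B.card + 2 * Cf.card := by ring
    omega
  have hable : a ≤ b := by omega
  rw [hEE, hsum, hsum2]
  have hcast : (a : ℝ) ≤ (b : ℝ) := by exact_mod_cast hable
  have hnn : (0 : ℝ) ≤ (a : ℝ) * (-2) + (b : ℝ) * 2 := by linarith
  exact mul_nonneg hJ.le hnn

end GSAux

/-- Theorem 1: If `d_D < (k-1)/2`, then `σ^{D+}` and `σ^{D-} = -σ^{D+}`
are ground state configurations: every spin configuration differing from them at
finitely many vertices has nonnegative excess energy. -/
theorem ground_states {V : Type*} (G : SimpleGraph V) (k : ℕ) (hk : 2 ≤ k)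
    (hG : IsCayleyTree G k) (root : V) (J : ℝ) (hJ : 0 < J)
    (D : Set (Sym2 V)) (hD : D ⊆ G.edgeSet)
    (dD : ℕ) (hbdd : BddAbove (Set.range fun v => incidentCount D v))
    (hdD : dD = ⨆ v, incidentCount D v)
    (hsmall : (dD : ℝ) < ((k : ℝ) - 1) / 2)
    (σ : V → ℤ) (hσ : IsSpin σ) (hσroot : σ root = 1) (hσD : SatisfiesD G D σ) :
    (∀ τ : V → ℤ, IsSpin τ → {v : V | τ v ≠ σ v}.Finite →
        0 ≤ excessEnergy G J τ σ)
      ∧ (∀ τ : V → ℤ, IsSpin τ → {v : V | τ v ≠ -σ v}.Finite →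
        0 ≤ excessEnergy G J τ (fun v => -σ v)) := by
  constructor
  · intro τ hτ hfin
    exact GSAux.ground_aux G k hk hG.acyclic hG.connected hG.degree root J hJ D hD dD hbdd hdD
      hsmall σ hσ hσD τ hτ hfin
  · intro τ hτ hfin
    have hspin : IsSpin (fun v => -σ v) := by
      intro v
      rcases hσ v with h | h
      · right; show -σ v = -1; rw [h]
      · left; show -σ v = 1; rw [h]; ring
    have hsat : SatisfiesD G D (fun v => -σ v) := by
      intro x y hadj
      have h := hσD x y hadj
      constructor
      · intro hd
        show (-σ x) * (-σ y) = -1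
        have heq : (-σ x) * (-σ y) = σ x * σ y := by ring
        rw [heq]
        exact h.1 hd
      · intro hd
        show (-σ x) * (-σ y) = 1
        have heq : (-σ x) * (-σ y) = σ x * σ y := by ring
        rw [heq]
        exact h.2 hd
    exact GSAux.ground_aux G k hk hG.acyclic hG.connected hG.degree root J hJ D hD dD hbdd hdD
      hsmall (fun v => -σ v) hspin hsat τ hτ hfin
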